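/- For every ℘_ω-semistable configuration K_1, …, K_m of subspaces of V⊗W with positive integer weights ω_1, …, ω_m, there exists a Jordan–Hölder filtration: a chain of subspaces 0 = V⁰ ⊊ V¹ ⊊ ⋯ ⊊ Vʰ = V such that for each l = 1, …, h the quotient configuration of {K_i} on Vˡ/Vˡ⁻¹ is ℘_ω-stable and its normalized total weighted dimension (1/(dim Vˡ − dim Vˡ⁻¹))·Σ_{i=1}^m ω_i·(dim(K_i ∩ (Vˡ⊗W)) − dim(K_i ∩ (Vˡ⁻¹⊗W))) equals ℘_ω({K_i}) = (1/dim V)·Σ_i ω_i·dim K_i. -/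

import Mathlib

open scoped TensorProduct
open Module

noncomputable section

variable {V : Type*} [AddCommGroup V] [Module ℂ V]

/-- The image of `H ⊗ W` in `V ⊗ W` under the canonical inclusion, for `H ⊆ V`. -/
def tensorSub (W : Type*) [AddCommGroup W] [Module ℂ W] (H : Submodule ℂ V) :
    Submodule ℂ (V ⊗[ℂ] W) :=
  LinearMap.range (TensorProduct.map H.subtype (LinearMap.id : W →ₗ[ℂ] W))

variable {W : Type*} [AddCommGroup W] [Module ℂ W]

/-- `℘_ω(H) = (1/dim H)·Σ_i ω_i·dim(K_i ∩ (H⊗W))`. -/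
def slopeConfig {m : ℕ} (ω : Fin m → ℕ) (K : Fin m → Submodule ℂ (V ⊗[ℂ] W))
    (H : Submodule ℂ V) : ℚ :=
  (∑ i, (ω i : ℚ) * (finrank ℂ ↥(K i ⊓ tensorSub W H) : ℚ)) / (finrank ℂ ↥H : ℚ)

/-- `℘_ω({K_i}) = (1/dim V)·Σ_i ω_i·dim K_i`. -/
def totalConfig {m : ℕ} (ω : Fin m → ℕ) (K : Fin m → Submodule ℂ (V ⊗[ℂ] W)) : ℚ :=
  (∑ i, (ω i : ℚ) * (finrank ℂ ↥(K i) : ℚ)) / (finrank ℂ V : ℚ)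

/-- The quotient configuration of `{K_i}` on `V''/V'` (for `V' ≤ V''`): the images of
`K_i ∩ (V''⊗W)` under the canonical map `(V⊗W) → (V/V')⊗W`, viewed inside `(V/V')⊗W`. -/
def quotConfig {m : ℕ} (K : Fin m → Submodule ℂ (V ⊗[ℂ] W)) (V' V'' : Submodule ℂ V) :
    Fin m → Submodule ℂ ((V ⧸ V') ⊗[ℂ] W) :=
  fun i => Submodule.map (TensorProduct.map V'.mkQ (LinearMap.id : W →ₗ[ℂ] W))
    (K i ⊓ tensorSub W V'')

/-- `℘_ω`-semistability of the quotient configuration on `V''/V'`, tested against nonzero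
proper subspaces of `V''/V'` (realized as submodules `S` of `V/V'` with `S < V''/V'`). -/
def QuotSemistable {m : ℕ} (ω : Fin m → ℕ) (K : Fin m → Submodule ℂ (V ⊗[ℂ] W))
    (V' V'' : Submodule ℂ V) : Prop :=
  ∀ S : Submodule ℂ (V ⧸ V'), S ≠ ⊥ → S < Submodule.map V'.mkQ V'' →
    (∑ i, (ω i : ℚ) * (finrank ℂ ↥(quotConfig K V' V'' i ⊓ tensorSub W S) : ℚ)) /
        (finrank ℂ ↥S : ℚ) ≤
      (∑ i, (ω i : ℚ) * (finrank ℂ ↥(quotConfig K V' V'' i) : ℚ)) /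
        (finrank ℂ ↥(Submodule.map V'.mkQ V'') : ℚ)

/-- The slope `μ` of the subquotient `V''/V'`:
`(Σ_i ω_i·(dim(K_i ∩ (V''⊗W)) − dim(K_i ∩ (V'⊗W)))) / (dim V'' − dim V')`. -/
def hnSlope {m : ℕ} (ω : Fin m → ℕ) (K : Fin m → Submodule ℂ (V ⊗[ℂ] W))
    (V' V'' : Submodule ℂ V) : ℚ :=
  (∑ i, (ω i : ℚ) * ((finrank ℂ ↥(K i ⊓ tensorSub W V'') : ℚ) -
      (finrank ℂ ↥(K i ⊓ tensorSub W V') : ℚ))) /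
    ((finrank ℂ ↥V'' : ℚ) - (finrank ℂ ↥V' : ℚ))

/-- `℘_ω`-stability of the quotient configuration on `V''/V'`. -/
def QuotStable {m : ℕ} (ω : Fin m → ℕ) (K : Fin m → Submodule ℂ (V ⊗[ℂ] W))
    (V' V'' : Submodule ℂ V) : Prop :=
  ∀ S : Submodule ℂ (V ⧸ V'), S ≠ ⊥ → S < Submodule.map V'.mkQ V'' →
    (∑ i, (ω i : ℚ) * (finrank ℂ ↥(quotConfig K V' V'' i ⊓ tensorSub W S) : ℚ)) /
        (finrank ℂ ↥S : ℚ) <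
      (∑ i, (ω i : ℚ) * (finrank ℂ ↥(quotConfig K V' V'' i) : ℚ)) /
        (finrank ℂ ↥(Submodule.map V'.mkQ V'') : ℚ)


section AuxArith

lemma aux_rat1 {a b c d s : ℚ} (hb : 0 < b) (hd : 0 < d) (h1 : a / b = s)
    (h2 : (a + c) / (b + d) ≤ s) : c / d ≤ s := by
  rw [div_eq_iff hb.ne'] at h1
  rw [div_le_iff₀ (by linarith)] at h2
  rw [div_le_iff₀ hd]
  nlinarith

lemma aux_rat2 {a b c d s : ℚ} (hb : 0 < b) (hd : 0 < d) (h1 : a / b = s)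
    (h2 : (a + c) / (b + d) = s) : c / d = s := by
  rw [div_eq_iff hb.ne'] at h1
  rw [div_eq_iff (by positivity : (0:ℚ) < b + d).ne'] at h2
  rw [div_eq_iff hd.ne']
  nlinarith

lemma aux_chain_append {α : Type*} {R : α → α → Prop} :
    ∀ (l1 : List α) (a b : α) (l2 : List α), List.Chain R a l1 →
      (a :: l1).getLast? = some b → List.Chain R b l2 → List.Chain R a (l1 ++ l2)
  | [], a, b, l2, _, hlast, h2 => by
      simp only [List.getLast?_singleton, Option.some.injEq] at hlast
      subst hlast
      simpa using h2
  | c :: l1, a, b, l2, h1, hlast, h2 => by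
      simp only [List.Chain, List.isChain_cons_cons] at h1
      simp only [List.cons_append, List.Chain, List.isChain_cons_cons]
      refine ⟨h1.1, aux_chain_append l1 c b l2 h1.2 ?_ h2⟩
      rwa [List.getLast?_cons_cons] at hlast

end AuxArith

section AuxTensor

variable {V₀ : Type*} [AddCommGroup V₀] [Module ℂ V₀]
variable {W₀ : Type*} [AddCommGroup W₀] [Module ℂ W₀]

lemma aux_range_map_eq {M : Type*} [AddCommGroup M] [Module ℂ M]
    (f : M →ₗ[ℂ] V₀) (H : Submodule ℂ V₀) (hf : LinearMap.range f = H) :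
    LinearMap.range (TensorProduct.map f (LinearMap.id : W₀ →ₗ[ℂ] W₀)) = tensorSub W₀ H := by
  rw [tensorSub, TensorProduct.range_map_eq_span_tmul, TensorProduct.range_map_eq_span_tmul]
  congr 1
  ext t
  simp only [Set.mem_setOf_eq, LinearMap.id_coe, id_eq]
  constructor
  · rintro ⟨mm, n, rfl⟩
    have : f mm ∈ H := hf ▸ LinearMap.mem_range_self f mm
    exact ⟨⟨f mm, this⟩, n, rfl⟩
  · rintro ⟨h, n, rfl⟩
    have : (h : V₀) ∈ LinearMap.range f := hf.symm ▸ h.2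
    obtain ⟨mm, hm⟩ := this
    exact ⟨mm, n, by rw [hm]; rfl⟩

lemma aux_tensorSub_mono {H H' : Submodule ℂ V₀} (h : H ≤ H') :
    tensorSub W₀ H ≤ tensorSub W₀ H' := by
  rw [tensorSub, tensorSub, TensorProduct.range_map_eq_span_tmul,
    TensorProduct.range_map_eq_span_tmul]
  apply Submodule.span_mono
  rintro t ⟨x, n, rfl⟩
  exact ⟨⟨x, h x.2⟩, n, rfl⟩

lemma aux_tensorSub_bot : tensorSub W₀ (⊥ : Submodule ℂ V₀) = ⊥ := by
  rw [tensorSub, TensorProduct.range_map_eq_span_tmul]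
  refine le_bot_iff.mp (Submodule.span_le.mpr ?_)
  rintro t ⟨x, n, rfl⟩
  obtain ⟨x, hx⟩ := x
  simp only [Submodule.mem_bot] at hx
  subst hx
  simp

lemma aux_tensorSub_top : tensorSub W₀ (⊤ : Submodule ℂ V₀) = ⊤ := by
  rw [tensorSub, LinearMap.range_eq_top]
  exact TensorProduct.map_surjective
    (fun v => ⟨⟨v, trivial⟩, rfl⟩) Function.surjective_id

lemma aux_ker_pi (V' : Submodule ℂ V₀) :
    LinearMap.ker (TensorProduct.map V'.mkQ (LinearMap.id : W₀ →ₗ[ℂ] W₀)) = tensorSub W₀ V' :=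
  rTensor_mkQ W₀ V'

lemma aux_map_tensorSub (V' T : Submodule ℂ V₀) :
    Submodule.map (TensorProduct.map V'.mkQ (LinearMap.id : W₀ →ₗ[ℂ] W₀)) (tensorSub W₀ T)
      = tensorSub W₀ (Submodule.map V'.mkQ T) := by
  rw [tensorSub, ← LinearMap.range_comp, ← TensorProduct.map_comp]
  refine aux_range_map_eq _ _ ?_
  rw [LinearMap.range_comp, Submodule.range_subtype]

lemma aux_finrank_map_add {M N : Type*} [AddCommGroup M] [Module ℂ M] [AddCommGroup N]
    [Module ℂ N] [FiniteDimensional ℂ M] (f : M →ₗ[ℂ] N) (p : Submodule ℂ M) :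
    finrank ℂ (Submodule.map f p) + finrank ℂ ↥(p ⊓ LinearMap.ker f) = finrank ℂ p := by
  have h := LinearMap.finrank_range_add_finrank_ker (f ∘ₗ p.subtype)
  rw [LinearMap.range_comp, Submodule.range_subtype, LinearMap.ker_comp] at h
  rw [← h]
  congr 1
  rw [← Submodule.finrank_map_subtype_eq p (Submodule.comap p.subtype (LinearMap.ker f)),
    Submodule.map_comap_subtype, inf_comm]

lemma aux_map_inf_map {M N : Type*} [AddCommGroup M] [Module ℂ M] [AddCommGroup N]
    [Module ℂ N] (f : M →ₗ[ℂ] N) (A B : Submodule ℂ M) :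
    Submodule.map f A ⊓ Submodule.map f B = Submodule.map f ((A ⊔ LinearMap.ker f) ⊓ B) := by
  apply le_antisymm
  · rintro x ⟨⟨a, ha, rfl⟩, ⟨b, hb, hab⟩⟩
    refine ⟨b, ⟨?_, hb⟩, hab⟩
    have hker : b - a ∈ LinearMap.ker f := by
      simp [LinearMap.mem_ker, map_sub, hab]
    have hba : b = a + (b - a) := by abel
    rw [hba]
    exact Submodule.add_mem_sup ha hker
  · refine le_inf ?_ (Submodule.map_mono inf_le_right)
    refine le_trans (Submodule.map_mono inf_le_left) ?_
    rw [Submodule.map_sup]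
    refine sup_le le_rfl ?_
    rintro x ⟨k, hk, rfl⟩
    rw [LinearMap.mem_ker.mp hk]
    exact Submodule.zero_mem _

lemma aux_finrank_mkQ [FiniteDimensional ℂ V₀] {V' T : Submodule ℂ V₀} (h : V' ≤ T) :
    finrank ℂ (Submodule.map V'.mkQ T) + finrank ℂ ↥V' = finrank ℂ ↥T := by
  have := aux_finrank_map_add V'.mkQ T
  rwa [Submodule.ker_mkQ, inf_eq_right.mpr h] at this

lemma aux_dim_quot_inter [FiniteDimensional ℂ V₀] [FiniteDimensional ℂ W₀]
    {m : ℕ} (K : Fin m → Submodule ℂ (V₀ ⊗[ℂ] W₀)) {V' T V'' : Submodule ℂ V₀}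
    (h1 : V' ≤ T) (h2 : T ≤ V'') (i : Fin m) :
    finrank ℂ ↥(quotConfig K V' V'' i ⊓ tensorSub W₀ (Submodule.map V'.mkQ T))
      + finrank ℂ ↥(K i ⊓ tensorSub W₀ V') = finrank ℂ ↥(K i ⊓ tensorSub W₀ T) := by
  set π := TensorProduct.map V'.mkQ (LinearMap.id : W₀ →ₗ[ℂ] W₀) with hπ
  have hker : LinearMap.ker π = tensorSub W₀ V' := aux_ker_pi V'
  have htV'T : tensorSub W₀ V' ≤ tensorSub W₀ T := aux_tensorSub_mono h1
  have htTV'' : tensorSub W₀ T ≤ tensorSub W₀ V'' := aux_tensorSub_mono h2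
  have e1 : quotConfig K V' V'' i ⊓ tensorSub W₀ (Submodule.map V'.mkQ T)
      = Submodule.map π ((K i ⊓ tensorSub W₀ T) ⊔ tensorSub W₀ V') := by
    rw [quotConfig, ← aux_map_tensorSub, aux_map_inf_map, hker]
    congr 1
    rw [sup_comm (K i ⊓ tensorSub W₀ V''), sup_inf_assoc_of_le _ htV'T, inf_assoc,
      inf_eq_right.mpr htTV'', sup_comm]
  have e2 := aux_finrank_map_add π ((K i ⊓ tensorSub W₀ T) ⊔ tensorSub W₀ V')
  rw [hker] at e2
  have e2' : ((K i ⊓ tensorSub W₀ T) ⊔ tensorSub W₀ V') ⊓ tensorSub W₀ V' = tensorSub W₀ V' :=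
    inf_eq_right.mpr le_sup_right
  rw [e2'] at e2
  have e3 := Submodule.finrank_sup_add_finrank_inf_eq (K i ⊓ tensorSub W₀ T) (tensorSub W₀ V')
  rw [inf_assoc, inf_eq_right.mpr htV'T] at e3
  rw [e1]
  omega

end AuxTensor

section AuxSlope

variable {V₀ : Type*} [AddCommGroup V₀] [Module ℂ V₀]
variable {W₀ : Type*} [AddCommGroup W₀] [Module ℂ W₀]

/-- The (weighted) numerator `Σ_i ω_i · dim(K_i ∩ (A⊗W))` as a rational number. -/
def nume {m : ℕ} (ω : Fin m → ℕ) (K : Fin m → Submodule ℂ (V₀ ⊗[ℂ] W₀))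
    (A : Submodule ℂ V₀) : ℚ :=
  ∑ i, (ω i : ℚ) * (finrank ℂ ↥(K i ⊓ tensorSub W₀ A) : ℚ)

lemma hnSlope_eq {m : ℕ} (ω : Fin m → ℕ) (K : Fin m → Submodule ℂ (V₀ ⊗[ℂ] W₀))
    (A B : Submodule ℂ V₀) :
    hnSlope ω K A B = (nume ω K B - nume ω K A) /
      ((finrank ℂ ↥B : ℚ) - (finrank ℂ ↥A : ℚ)) := by
  simp only [hnSlope, nume, mul_sub, Finset.sum_sub_distrib]

lemma aux_denpos [FiniteDimensional ℂ V₀] {A B : Submodule ℂ V₀} (h : A < B) :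
    (0:ℚ) < (finrank ℂ ↥B : ℚ) - (finrank ℂ ↥A : ℚ) := by
  have := Submodule.finrank_lt_finrank_of_lt h
  have : (finrank ℂ ↥A : ℚ) < (finrank ℂ ↥B : ℚ) := by exact_mod_cast this
  linarith

lemma aux_sum_quot [FiniteDimensional ℂ V₀] [FiniteDimensional ℂ W₀]
    {m : ℕ} (ω : Fin m → ℕ) (K : Fin m → Submodule ℂ (V₀ ⊗[ℂ] W₀))
    {V' T V'' : Submodule ℂ V₀} (h1 : V' ≤ T) (h2 : T ≤ V'') :
    (∑ i, (ω i : ℚ) *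
        (finrank ℂ ↥(quotConfig K V' V'' i ⊓ tensorSub W₀ (Submodule.map V'.mkQ T)) : ℚ))
      = nume ω K T - nume ω K V' := by
  rw [nume, nume, ← Finset.sum_sub_distrib]
  refine Finset.sum_congr rfl fun i _ => ?_
  have h := aux_dim_quot_inter K h1 h2 i
  have h' : (finrank ℂ ↥(quotConfig K V' V'' i ⊓ tensorSub W₀ (Submodule.map V'.mkQ T)) : ℚ)
      = (finrank ℂ ↥(K i ⊓ tensorSub W₀ T) : ℚ) - (finrank ℂ ↥(K i ⊓ tensorSub W₀ V') : ℚ) := by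
    have := congrArg (fun n : ℕ => (n : ℚ)) h
    push_cast at this
    linarith
  rw [h']
  ring

lemma aux_quotConfig_le {m : ℕ} (K : Fin m → Submodule ℂ (V₀ ⊗[ℂ] W₀))
    (V' V'' : Submodule ℂ V₀) (i : Fin m) :
    quotConfig K V' V'' i ≤ tensorSub W₀ (Submodule.map V'.mkQ V'') := by
  rw [quotConfig, ← aux_map_tensorSub]
  exact Submodule.map_mono inf_le_right

lemma aux_quotStable_of [FiniteDimensional ℂ V₀] [FiniteDimensional ℂ W₀]
    {m : ℕ} (ω : Fin m → ℕ) (K : Fin m → Submodule ℂ (V₀ ⊗[ℂ] W₀))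
    {V' V'' : Submodule ℂ V₀} (hlt : V' < V'')
    (h : ∀ T, V' < T → T < V'' → hnSlope ω K V' T < hnSlope ω K V' V'') :
    QuotStable ω K V' V'' := by
  intro S hS0 hSlt
  set T := Submodule.comap V'.mkQ S with hT
  have hV'T : V' ≤ T := by
    intro x hx
    rw [hT, Submodule.mem_comap, Submodule.mkQ_apply, (Submodule.Quotient.mk_eq_zero V').mpr hx]
    exact S.zero_mem
  have hmapT : Submodule.map V'.mkQ T = S := by
    rw [hT, Submodule.map_comap_eq, Submodule.range_mkQ, top_inf_eq]
  have hTV'' : T ≤ V'' := by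
    have : T ≤ Submodule.comap V'.mkQ (Submodule.map V'.mkQ V'') :=
      Submodule.comap_mono hSlt.le
    rwa [Submodule.comap_map_eq, Submodule.ker_mkQ, sup_eq_left.mpr hlt.le] at this
  have hV'ltT : V' < T := by
    refine lt_of_le_of_ne hV'T fun hc => hS0 ?_
    rw [← hmapT, ← hc]
    refine le_bot_iff.mp fun x hx => ?_
    obtain ⟨y, hy, rfl⟩ := hx
    simp [Submodule.mkQ_apply, (Submodule.Quotient.mk_eq_zero V').mpr hy]
  have hTltV'' : T < V'' := by
    refine lt_of_le_of_ne hTV'' fun hc => hSlt.ne ?_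
    rw [← hmapT, hc]
  have hkey := h T hV'ltT hTltV''
  -- rewrite LHS
  have hden1 : (finrank ℂ ↥S : ℚ) = (finrank ℂ ↥T : ℚ) - (finrank ℂ ↥V' : ℚ) := by
    have := aux_finrank_mkQ (V₀ := V₀) hV'T
    rw [hmapT] at this
    have := congrArg (fun n : ℕ => (n : ℚ)) this
    push_cast at this
    linarith
  have hLHS : (∑ i, (ω i : ℚ) * (finrank ℂ ↥(quotConfig K V' V'' i ⊓ tensorSub W₀ S) : ℚ))
      = nume ω K T - nume ω K V' := by
    rw [← hmapT]
    exact aux_sum_quot ω K hV'T hTV''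
  have hden2 : (finrank ℂ ↥(Submodule.map V'.mkQ V'') : ℚ)
      = (finrank ℂ ↥V'' : ℚ) - (finrank ℂ ↥V' : ℚ) := by
    have := aux_finrank_mkQ (V₀ := V₀) hlt.le
    have := congrArg (fun n : ℕ => (n : ℚ)) this
    push_cast at this
    linarith
  have hRHS : (∑ i, (ω i : ℚ) * (finrank ℂ ↥(quotConfig K V' V'' i) : ℚ))
      = nume ω K V'' - nume ω K V' := by
    have h' : ∀ i : Fin m, quotConfig K V' V'' i
        = quotConfig K V' V'' i ⊓ tensorSub W₀ (Submodule.map V'.mkQ V'') :=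
      fun i => (inf_eq_left.mpr (aux_quotConfig_le K V' V'' i)).symm
    calc (∑ i, (ω i : ℚ) * (finrank ℂ ↥(quotConfig K V' V'' i) : ℚ))
        = ∑ i, (ω i : ℚ) *
            (finrank ℂ ↥(quotConfig K V' V'' i ⊓ tensorSub W₀ (Submodule.map V'.mkQ V'')) : ℚ) := by
          refine Finset.sum_congr rfl fun i _ => ?_
          rw [← h' i]
      _ = nume ω K V'' - nume ω K V' := aux_sum_quot ω K hlt.le le_rfl
  rw [hLHS, hRHS, hden1, hden2, ← hnSlope_eq, ← hnSlope_eq]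
  exact hkey

/-- Main recursion: a semistable interval admits a stable chain with constant slope. -/
lemma aux_main [FiniteDimensional ℂ V₀] [FiniteDimensional ℂ W₀]
    {m : ℕ} (ω : Fin m → ℕ) (K : Fin m → Submodule ℂ (V₀ ⊗[ℂ] W₀)) :
    ∀ (n : ℕ) (A B : Submodule ℂ V₀), A < B → finrank ℂ ↥B ≤ finrank ℂ ↥A + n →
      (∀ T, A < T → T < B → hnSlope ω K A T ≤ hnSlope ω K A B) →
      ∃ l : List (Submodule ℂ V₀), l ≠ [] ∧
        List.Chain (fun X Y => X < Y ∧
          (∀ T, X < T → T < Y → hnSlope ω K X T < hnSlope ω K X Y) ∧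
          hnSlope ω K X Y = hnSlope ω K A B) A l ∧
        (A :: l).getLast? = some B := by
  intro n
  induction n with
  | zero =>
    intro A B hAB hle _
    have := Submodule.finrank_lt_finrank_of_lt hAB
    omega
  | succ n ih =>
    intro A B hAB hle hsst
    by_cases hst : ∀ T, A < T → T < B → hnSlope ω K A T < hnSlope ω K A B
    · exact ⟨[B], by simp, List.Chain.cons ⟨hAB, hst, rfl⟩ List.Chain.nil, by simp⟩
    · push_neg at hst
      obtain ⟨T, hAT, hTB, hge⟩ := hst
      have heq : hnSlope ω K A T = hnSlope ω K A B := le_antisymm (hsst T hAT hTB) hge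
      have hb : (0:ℚ) < (finrank ℂ ↥T : ℚ) - (finrank ℂ ↥A : ℚ) := aux_denpos hAT
      have hd : (0:ℚ) < (finrank ℂ ↥B : ℚ) - (finrank ℂ ↥T : ℚ) := aux_denpos hTB
      have h1 : (nume ω K T - nume ω K A) / ((finrank ℂ ↥T : ℚ) - (finrank ℂ ↥A : ℚ))
          = hnSlope ω K A B := by rw [← hnSlope_eq]; exact heq
      have heq2' : hnSlope ω K T B = hnSlope ω K A B := by
        rw [hnSlope_eq]
        refine aux_rat2 hb hd h1 ?_
        rw [show (nume ω K T - nume ω K A) + (nume ω K B - nume ω K T)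
              = nume ω K B - nume ω K A by ring,
          show ((finrank ℂ ↥T : ℚ) - (finrank ℂ ↥A : ℚ))
              + ((finrank ℂ ↥B : ℚ) - (finrank ℂ ↥T : ℚ))
              = (finrank ℂ ↥B : ℚ) - (finrank ℂ ↥A : ℚ) by ring, ← hnSlope_eq]
      have hsst1 : ∀ T', A < T' → T' < T → hnSlope ω K A T' ≤ hnSlope ω K A T :=
        fun T' h1' h2' => (hsst T' h1' (h2'.trans hTB)).trans_eq heq.symm
      have hsst2 : ∀ T', T < T' → T' < B → hnSlope ω K T T' ≤ hnSlope ω K T B := by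
        intro T' hTT' hT'B
        rw [heq2', hnSlope_eq]
        have hd' : (0:ℚ) < (finrank ℂ ↥T' : ℚ) - (finrank ℂ ↥T : ℚ) := aux_denpos hTT'
        refine aux_rat1 hb hd' h1 ?_
        rw [show (nume ω K T - nume ω K A) + (nume ω K T' - nume ω K T)
              = nume ω K T' - nume ω K A by ring,
          show ((finrank ℂ ↥T : ℚ) - (finrank ℂ ↥A : ℚ))
              + ((finrank ℂ ↥T' : ℚ) - (finrank ℂ ↥T : ℚ))
              = (finrank ℂ ↥T' : ℚ) - (finrank ℂ ↥A : ℚ) by ring, ← hnSlope_eq]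
        exact hsst T' (hAT.trans hTT') hT'B
      have hfAT := Submodule.finrank_lt_finrank_of_lt hAT
      have hfTB := Submodule.finrank_lt_finrank_of_lt hTB
      obtain ⟨l1, hl1ne, hl1, hl1last⟩ := ih A T hAT (by omega) hsst1
      obtain ⟨l2, hl2ne, hl2, hl2last⟩ := ih T B hTB (by omega) hsst2
      rw [heq] at hl1
      rw [heq2'] at hl2
      refine ⟨l1 ++ l2, by simp [hl1ne], aux_chain_append l1 A T l2 hl1 hl1last hl2, ?_⟩
      have : (A :: (l1 ++ l2)) = (A :: l1) ++ l2 := by simp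
      rw [this, List.getLast?_append_of_ne_nil _ hl2ne]
      obtain ⟨x, l2', rfl⟩ := List.exists_cons_of_ne_nil hl2ne
      rwa [List.getLast?_cons_cons] at hl2last
      
end AuxSlope

/-- every `℘_ω`-semistable configuration admits a Jordan–Hölder filtration. -/
theorem stmt_10 (V W : Type*) [AddCommGroup V] [Module ℂ V] [FiniteDimensional ℂ V] [Nontrivial V]
    [AddCommGroup W] [Module ℂ W] [FiniteDimensional ℂ W] [Nontrivial W]
    (m : ℕ) (hm : 1 ≤ m) (ω : Fin m → ℕ) (hω : ∀ i, 0 < ω i)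
    (K : Fin m → Submodule ℂ (V ⊗[ℂ] W))
    (hss : ∀ H : Submodule ℂ V, H ≠ ⊥ → H ≠ ⊤ → slopeConfig ω K H ≤ totalConfig ω K) :
    ∃ (h : ℕ) (c : Fin (h + 1) → Submodule ℂ V),
      c 0 = ⊥ ∧ c (Fin.last h) = ⊤ ∧ StrictMono c ∧
      (∀ l : Fin h, QuotStable ω K (c l.castSucc) (c l.succ)) ∧
      (∀ l : Fin h, hnSlope ω K (c l.castSucc) (c l.succ) = totalConfig ω K) := by
  classical
  have hbotlt : (⊥ : Submodule ℂ V) < ⊤ := by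
    refine lt_top_iff_ne_top.mpr fun hc => ?_
    obtain ⟨x, hx⟩ := exists_ne (0 : V)
    exact hx (by simpa using (hc ▸ Submodule.mem_top : x ∈ (⊥ : Submodule ℂ V)))
  have hb0 : nume ω K ⊥ = 0 := by
    rw [nume]
    refine Finset.sum_eq_zero fun i _ => ?_
    rw [aux_tensorSub_bot, inf_bot_eq]
    simp
  have hnume_top : nume ω K ⊤ = ∑ i, (ω i : ℚ) * (finrank ℂ ↥(K i) : ℚ) := by
    rw [nume]
    refine Finset.sum_congr rfl fun i _ => ?_
    rw [aux_tensorSub_top, inf_top_eq]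
  have hrank_bot : finrank ℂ (⊥ : Submodule ℂ V) = 0 := finrank_bot ℂ V
  have hrank_top : finrank ℂ (⊤ : Submodule ℂ V) = finrank ℂ V := finrank_top ℂ V
  have hslope_top : hnSlope ω K ⊥ ⊤ = totalConfig ω K := by
    rw [hnSlope_eq, hb0, hnume_top, totalConfig, hrank_bot, hrank_top]
    norm_num
  have hslope_T : ∀ T : Submodule ℂ V, hnSlope ω K ⊥ T = slopeConfig ω K T := by
    intro T
    rw [hnSlope_eq, hb0, slopeConfig, hrank_bot, nume]
    norm_num
  have hsst : ∀ T : Submodule ℂ V, ⊥ < T → T < ⊤ → hnSlope ω K ⊥ T ≤ hnSlope ω K ⊥ ⊤ := by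
    intro T h1 h2
    rw [hslope_T, hslope_top]
    exact hss T (bot_lt_iff_ne_bot.mp h1) (lt_top_iff_ne_top.mp h2)
  obtain ⟨l, hlne, hl, hllast⟩ := aux_main ω K (finrank ℂ V) ⊥ ⊤ hbotlt
    (by rw [hrank_bot, hrank_top]; omega) hsst
  rw [hslope_top] at hl
  have hchain' : List.Chain' _ (⊥ :: l) := hl
  have hsteps := List.isChain_iff_getElem.mp hchain'
  refine ⟨l.length, fun j => (⊥ :: l).get ⟨j.val, by simpa using j.isLt⟩, rfl, ?_, ?_, ?_, ?_⟩
  · have h1 : (⊥ :: l).getLast? = some ((⊥ :: l).getLast (by simp)) :=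
      List.getLast?_eq_getLast_of_ne_nil (by simp)
    rw [hllast] at h1
    have h2 : (⊥ :: l).getLast (by simp) = (⊥ :: l).get ⟨(⊥ :: l).length - 1, by simp⟩ :=
      List.getLast_eq_getElem _
    simp only [List.length_cons, Nat.add_sub_cancel] at h2
    have : (⊥ :: l).get ⟨l.length, by simp⟩ = ⊤ := by
      rw [← h2]
      exact (Option.some.injEq _ _ ▸ h1).symm ▸ rfl
    simpa [Fin.last] using this
  · rw [Fin.strictMono_iff_lt_succ]
    intro i
    exact (hsteps i.val (by simpa using i.isLt)).1
  · intro i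
    have h := hsteps i.val (by simpa using i.isLt)
    exact aux_quotStable_of ω K h.1 h.2.1
  · intro i
    have h := hsteps i.val (by simpa using i.isLt)
    exact h.2.2
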